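/- arXiv:0802.2475 — 2 statements merged into one kernel-verified Lean document; each statement's English description precedes it below -/
import Mathlib

section
/- If f, g ∈ 𝒯, then |f(iy)| ≤ |(f*g)(iy)| for all y > 0. -/
set_option maxHeartbeats 1000000

open MeasureTheory Complex

lemma realkey (a b t : ℝ) (ha : 0 ≤ a) (hb : 0 ≤ b) (ht0 : 0 ≤ t) (ht1 : t ≤ 1) :
    2 * ((1/(1+a^2)) * (1/(1+b^2)) + (a/(1+a^2)) * (b/(1+b^2)))
      ≤ (1/(1+(a*t)^2)) * (1/(1+b^2)) + ((a*t)/(1+(a*t)^2)) * (b/(1+b^2))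
        + (1/(1+(b*t)^2)) * (1/(1+a^2)) + ((b*t)/(1+(b*t)^2)) * (a/(1+a^2)) := by
  have hA : (0:ℝ) < 1 + a^2 := by positivity
  have hB : (0:ℝ) < 1 + b^2 := by positivity
  have hP : (0:ℝ) < 1 + (a*t)^2 := by positivity
  have hQ : (0:ℝ) < 1 + (b*t)^2 := by positivity
  rw [← sub_nonneg]
  have key : ((1/(1+(a*t)^2)) * (1/(1+b^2)) + ((a*t)/(1+(a*t)^2)) * (b/(1+b^2))
        + (1/(1+(b*t)^2)) * (1/(1+a^2)) + ((b*t)/(1+(b*t)^2)) * (a/(1+a^2)))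
      - 2 * ((1/(1+a^2)) * (1/(1+b^2)) + (a/(1+a^2)) * (b/(1+b^2)))
      = ((1-t) * ((a-b)^2*((1+t)+a*b*t*(1-t))
          + 2*a*b*t*(1+a*b+a*b*t^2+(a*b*t)^2)))
        / ((1+a^2)*(1+b^2)*(1+(a*t)^2)*(1+(b*t)^2)) := by
    field_simp
    ring
  rw [key]
  apply div_nonneg _ (by positivity)
  have h1 : (0:ℝ) ≤ 1 - t := by linarith
  have h2 : (0:ℝ) ≤ (a-b)^2*((1+t)+a*b*t*(1-t)) := by
    apply mul_nonneg (sq_nonneg _)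
    nlinarith [mul_nonneg (mul_nonneg (mul_nonneg ha hb) ht0) h1]
  have h3 : (0:ℝ) ≤ 2*a*b*t*(1+a*b+a*b*t^2+(a*b*t)^2) := by positivity
  exact mul_nonneg h1 (by linarith)

lemma key2 (y s u t : ℝ) (hs0 : 0 ≤ s) (hu0 : 0 ≤ u) (hy : 0 ≤ y) (ht0 : 0 ≤ t) (ht1 : t ≤ 1) :
    2 * ((1/(1+(s*y)^2)) * (1/(1+(u*y)^2)) + (s*y/(1+(s*y)^2)) * (u*y/(1+(u*y)^2)))
      ≤ (1/(1+(s*t*y)^2)) * (1/(1+(u*y)^2)) + ((s*t*y)/(1+(s*t*y)^2)) * (u*y/(1+(u*y)^2))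
        + (1/(1+(u*t*y)^2)) * (1/(1+(s*y)^2)) + ((u*t*y)/(1+(u*t*y)^2)) * (s*y/(1+(s*y)^2)) := by
  have h := realkey (s*y) (u*y) t (mul_nonneg hs0 hy) (mul_nonneg hu0 hy) ht0 ht1
  have e1 : s*y*t = s*t*y := by ring
  have e2 : u*y*t = u*t*y := by ring
  rwa [e1, e2] at h

lemma Adecomp (s y : ℝ) :
    (1 - (s:ℂ) * (y * I))⁻¹ = ((1/(1+(s*y)^2) : ℝ) : ℂ) + ((s*y/(1+(s*y)^2) : ℝ) : ℂ) * I := by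
  have h : (1:ℝ) + s^2*y^2 ≠ 0 := by positivity
  simp only [Complex.ext_iff, Complex.inv_re, Complex.inv_im, Complex.normSq_apply,
    Complex.sub_re, Complex.sub_im, Complex.mul_re, Complex.mul_im, Complex.one_re,
    Complex.one_im, Complex.ofReal_re, Complex.ofReal_im, Complex.I_re, Complex.I_im,
    Complex.add_re, Complex.add_im]
  constructor <;> (field_simp; ring_nf)
  · field_simp; ring
  · field_simp

lemma bddInt {α : Type*} [MeasurableSpace α] (m : Measure α) [IsFiniteMeasure m] {f : α → ℝ}
    (hf : AEStronglyMeasurable f m) {C : ℝ} (h : ∀ᵐ x ∂m, |f x| ≤ C) : Integrable f m :=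
  (integrable_const C).mono' hf (by simpa [Real.norm_eq_abs] using h)

lemma ae_memK (m : Measure ℝ) (hm : m (Set.Icc (0:ℝ) 1)ᶜ = 0) :
    ∀ᵐ x ∂m, x ∈ Set.Icc (0:ℝ) 1 := by
  rw [ae_iff]; exact hm

lemma ae_memK2 (μ ν : Measure ℝ) [IsProbabilityMeasure μ] [IsProbabilityMeasure ν]
    (hμ : μ (Set.Icc (0:ℝ) 1)ᶜ = 0) (hν : ν (Set.Icc (0:ℝ) 1)ᶜ = 0) :
    ∀ᵐ p ∂(μ.prod ν), p.1 ∈ Set.Icc (0:ℝ) 1 ∧ p.2 ∈ Set.Icc (0:ℝ) 1 := by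
  have h1 : (μ.prod ν) {p : ℝ × ℝ | p.1 ∉ Set.Icc (0:ℝ) 1} = 0 := by
    have he : {p : ℝ × ℝ | p.1 ∉ Set.Icc (0:ℝ) 1} = (Set.Icc (0:ℝ) 1)ᶜ ×ˢ (Set.univ : Set ℝ) := by
      ext p; simp
    rw [he, Measure.prod_prod, hμ]; simp
  have h2 : (μ.prod ν) {p : ℝ × ℝ | p.2 ∉ Set.Icc (0:ℝ) 1} = 0 := by
    have he : {p : ℝ × ℝ | p.2 ∉ Set.Icc (0:ℝ) 1} = (Set.univ : Set ℝ) ×ˢ (Set.Icc (0:ℝ) 1)ᶜ := by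
      ext p; simp
    rw [he, Measure.prod_prod, hν]; simp
  have g1 : ∀ᵐ p ∂(μ.prod ν), p.1 ∈ Set.Icc (0:ℝ) 1 := by rw [ae_iff]; exact h1
  have g2 : ∀ᵐ p ∂(μ.prod ν), p.2 ∈ Set.Icc (0:ℝ) 1 := by rw [ae_iff]; exact h2
  exact g1.and g2

lemma polyint (m : Measure ℝ) [IsProbabilityMeasure m] (hK : ∀ᵐ x ∂m, x ∈ Set.Icc (0:ℝ) 1)
    (q : Polynomial ℝ) :
    ∫ x, q.eval x ∂m = ∑ i ∈ Finset.range (q.natDegree+1), q.coeff i * ∫ x, x^i ∂m := by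
  have hint : ∀ i : ℕ, Integrable (fun x : ℝ => q.coeff i * x ^ i) m := by
    intro i
    apply bddInt m (continuous_const.mul (continuous_pow i)).aestronglyMeasurable
      (C := |q.coeff i|)
    filter_upwards [hK] with x hx
    simp only [Pi.mul_apply, Pi.pow_apply, Function.comp_apply]; rw [_root_.abs_mul]
    have h1 : |x ^ i| ≤ 1 := by
      rw [_root_.abs_pow]
      exact pow_le_one₀ (abs_nonneg x) (abs_le.mpr ⟨by linarith [hx.1], hx.2⟩)
    exact mul_le_of_le_one_right (abs_nonneg _) h1
  calc ∫ x, q.eval x ∂m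
      = ∫ x, ∑ i ∈ Finset.range (q.natDegree+1), q.coeff i * x ^ i ∂m := by
        congr 1; ext x; exact q.eval_eq_sum_range x
    _ = ∑ i ∈ Finset.range (q.natDegree+1), ∫ x, q.coeff i * x ^ i ∂m :=
        integral_finset_sum _ (fun i _ => hint i)
    _ = ∑ i ∈ Finset.range (q.natDegree+1), q.coeff i * ∫ x, x^i ∂m := by
        simp [integral_const_mul]

lemma polyint2 (μ ν : Measure ℝ) [IsProbabilityMeasure μ] [IsProbabilityMeasure ν]
    (hμ : μ (Set.Icc (0:ℝ) 1)ᶜ = 0) (hν : ν (Set.Icc (0:ℝ) 1)ᶜ = 0) (q : Polynomial ℝ) :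
    ∫ p, q.eval (p.1 * p.2) ∂(μ.prod ν)
      = ∑ i ∈ Finset.range (q.natDegree+1), q.coeff i * ((∫ x, x^i ∂μ) * (∫ x, x^i ∂ν)) := by
  have hK := ae_memK2 μ ν hμ hν
  have hint : ∀ i : ℕ, Integrable (fun p : ℝ × ℝ => q.coeff i * (p.1 ^ i * p.2 ^ i)) (μ.prod ν) := by
    intro i
    apply bddInt _ (continuous_const.mul
      (((continuous_fst.pow i).mul (continuous_snd.pow i)))).aestronglyMeasurable
      (C := |q.coeff i|)
    filter_upwards [hK] with p hp
    simp only [Pi.mul_apply, Pi.pow_apply, Function.comp_apply]; rw [_root_.abs_mul]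
    have h1 : |p.1 ^ i * p.2 ^ i| ≤ 1 := by
      rw [_root_.abs_mul, _root_.abs_pow, _root_.abs_pow]
      calc |p.1| ^ i * |p.2| ^ i
          ≤ 1 * 1 := mul_le_mul
              (pow_le_one₀ (abs_nonneg _) (abs_le.mpr ⟨by linarith [hp.1.1], hp.1.2⟩))
              (pow_le_one₀ (abs_nonneg _) (abs_le.mpr ⟨by linarith [hp.2.1], hp.2.2⟩))
              (by positivity) (by norm_num)
        _ = 1 := by norm_num
    exact mul_le_of_le_one_right (abs_nonneg _) h1
  calc ∫ p, q.eval (p.1 * p.2) ∂(μ.prod ν)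
      = ∫ p : ℝ × ℝ, ∑ i ∈ Finset.range (q.natDegree+1), q.coeff i * (p.1 ^ i * p.2 ^ i)
          ∂(μ.prod ν) := by
        congr 1; ext p; rw [q.eval_eq_sum_range]
        exact Finset.sum_congr rfl (fun i _ => by rw [mul_pow])
    _ = ∑ i ∈ Finset.range (q.natDegree+1), ∫ p : ℝ × ℝ, q.coeff i * (p.1 ^ i * p.2 ^ i)
          ∂(μ.prod ν) := integral_finset_sum _ (fun i _ => hint i)
    _ = ∑ i ∈ Finset.range (q.natDegree+1), q.coeff i * ((∫ x, x^i ∂μ) * (∫ x, x^i ∂ν)) := by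
        refine Finset.sum_congr rfl (fun i _ => ?_)
        rw [integral_const_mul, integral_prod_mul (f := fun x : ℝ => x ^ i) (g := fun x : ℝ => x ^ i)]

lemma transfer (μ ν ρ : Measure ℝ)
    [IsProbabilityMeasure μ] [IsProbabilityMeasure ν] [IsProbabilityMeasure ρ]
    (hμ : μ (Set.Icc (0:ℝ) 1)ᶜ = 0) (hν : ν (Set.Icc (0:ℝ) 1)ᶜ = 0)
    (hρ : ρ (Set.Icc (0:ℝ) 1)ᶜ = 0)
    (hmom : ∀ k : ℕ, (∫ t, t ^ k ∂ρ) = (∫ t, t ^ k ∂μ) * (∫ t, t ^ k ∂ν))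
    (g : ℝ → ℝ) (hg : Continuous g) :
    ∫ x, g x ∂ρ = ∫ p, g (p.1 * p.2) ∂(μ.prod ν) := by
  have hKρ := ae_memK ρ hρ
  have hK2 := ae_memK2 μ ν hμ hν
  have hK2m : ∀ᵐ p ∂(μ.prod ν), p.1 * p.2 ∈ Set.Icc (0:ℝ) 1 := by
    filter_upwards [hK2] with p hp
    obtain ⟨⟨h1, h2⟩, h3, h4⟩ := hp
    exact ⟨mul_nonneg h1 h3, by nlinarith⟩
  have main : ∀ ε : ℝ, 0 < ε → |(∫ x, g x ∂ρ) - ∫ p, g (p.1 * p.2) ∂(μ.prod ν)| ≤ 2 * ε := by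
    intro ε hε
    obtain ⟨q, hq⟩ := exists_polynomial_near_of_continuousOn 0 1 g hg.continuousOn ε hε
    have hmid : ∫ x, q.eval x ∂ρ = ∫ p, q.eval (p.1 * p.2) ∂(μ.prod ν) := by
      rw [polyint ρ hKρ q, polyint2 μ ν hμ hν q]
      exact Finset.sum_congr rfl (fun i _ => by rw [hmom i])
    obtain ⟨C, hC⟩ := (isCompact_Icc : IsCompact (Set.Icc (0:ℝ) 1)).exists_bound_of_continuousOn
      hg.continuousOn
    have hgb : ∀ x ∈ Set.Icc (0:ℝ) 1, |g x| ≤ C := fun x hx => by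
      simpa [Real.norm_eq_abs] using hC x hx
    have Iρg : Integrable g ρ := bddInt ρ hg.aestronglyMeasurable
      (by filter_upwards [hKρ] with x hx using hgb x hx)
    have Iρq : Integrable (fun x => q.eval x) ρ := bddInt ρ
      (q.continuous).aestronglyMeasurable
      (C := C + ε)
      (by filter_upwards [hKρ] with x hx
          have : |q.eval x| ≤ |g x| + ε := by
            have h3 := abs_sub_abs_le_abs_sub (q.eval x) (g x)
            linarith [hq x hx, abs_nonneg (q.eval x - g x)]
          linarith [hgb x hx])
    have Ipg : Integrable (fun p : ℝ × ℝ => g (p.1 * p.2)) (μ.prod ν) :=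
      bddInt _ (hg.comp (continuous_fst.mul continuous_snd)).aestronglyMeasurable
        (by filter_upwards [hK2m] with p hp using hgb _ hp)
    have Ipq : Integrable (fun p : ℝ × ℝ => q.eval (p.1 * p.2)) (μ.prod ν) := bddInt _
      (q.continuous.comp (continuous_fst.mul continuous_snd)).aestronglyMeasurable
      (C := C + ε)
      (by filter_upwards [hK2m] with p hp
          have : |q.eval (p.1*p.2)| ≤ |g (p.1*p.2)| + ε := by
            have h3 := abs_sub_abs_le_abs_sub (q.eval (p.1*p.2)) (g (p.1*p.2))
            linarith [hq _ hp]
          linarith [hgb _ hp])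
    have e1 : |(∫ x, g x ∂ρ) - ∫ x, q.eval x ∂ρ| ≤ ε := by
      rw [← integral_sub Iρg Iρq]
      have := norm_integral_le_of_norm_le_const (μ := ρ)
        (f := fun x => g x - q.eval x) (C := ε)
        (by filter_upwards [hKρ] with x hx
            rw [Real.norm_eq_abs, abs_sub_comm]
            exact le_of_lt (hq x hx))
      simpa [Real.norm_eq_abs] using this
    have e2 : |(∫ p, g (p.1*p.2) ∂(μ.prod ν)) - ∫ p, q.eval (p.1*p.2) ∂(μ.prod ν)| ≤ ε := by
      rw [← integral_sub Ipg Ipq]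
      have := norm_integral_le_of_norm_le_const (μ := μ.prod ν)
        (f := fun p : ℝ × ℝ => g (p.1*p.2) - q.eval (p.1*p.2)) (C := ε)
        (by filter_upwards [hK2m] with p hp
            rw [Real.norm_eq_abs, abs_sub_comm]
            exact le_of_lt (hq _ hp))
      simpa [Real.norm_eq_abs] using this
    calc |(∫ x, g x ∂ρ) - ∫ p, g (p.1 * p.2) ∂(μ.prod ν)|
        ≤ |(∫ x, g x ∂ρ) - ∫ x, q.eval x ∂ρ|
          + |(∫ p, g (p.1*p.2) ∂(μ.prod ν)) - ∫ p, q.eval (p.1*p.2) ∂(μ.prod ν)| := by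
          rw [hmid, abs_sub_comm (∫ p, g (p.1*p.2) ∂(μ.prod ν))
            (∫ p, q.eval (p.1*p.2) ∂(μ.prod ν))]
          exact abs_sub_le _ _ _
      _ ≤ 2 * ε := by linarith
  by_contra hne
  have hd : 0 < |(∫ x, g x ∂ρ) - ∫ p, g (p.1 * p.2) ∂(μ.prod ν)| := by
    rw [abs_pos, sub_ne_zero]; exact hne
  have := main (|(∫ x, g x ∂ρ) - ∫ p, g (p.1 * p.2) ∂(μ.prod ν)| / 3) (by linarith)
  linarith

lemma cintegral {α : Type*} [MeasurableSpace α] (m : Measure α) {u v : α → ℝ}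
    (hu : Integrable u m) (hv : Integrable v m) :
    ∫ x, (((u x : ℝ) : ℂ) + ((v x : ℝ) : ℂ) * I) ∂m
      = ((∫ x, u x ∂m : ℝ) : ℂ) + ((∫ x, v x ∂m : ℝ) : ℂ) * I := by
  have h1 : Integrable (fun x => ((u x : ℝ) : ℂ)) m := hu.ofReal
  have h2 : Integrable (fun x => ((v x : ℝ) : ℂ) * I) m := hv.ofReal.mul_const I
  have e1 := Complex.ofRealCLM.integral_comp_comm hu
  have e2 := Complex.ofRealCLM.integral_comp_comm hv
  simp only [Complex.ofRealCLM_apply] at e1 e2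
  rw [integral_add h1 h2, integral_mul_const, e1, e2]

theorem stmt5 (μ ν ρ : Measure ℝ)
    [IsProbabilityMeasure μ] [IsProbabilityMeasure ν] [IsProbabilityMeasure ρ]
    (hμ : μ (Set.Icc (0:ℝ) 1)ᶜ = 0) (hν : ν (Set.Icc (0:ℝ) 1)ᶜ = 0)
    (hρ : ρ (Set.Icc (0:ℝ) 1)ᶜ = 0)
    (hmom : ∀ k : ℕ, (∫ t, t ^ k ∂ρ) = (∫ t, t ^ k ∂μ) * (∫ t, t ^ k ∂ν))
    (f fg : ℂ → ℂ)
    (hf : ∀ z : ℂ, f z = ∫ t, (1 - (t:ℂ) * z)⁻¹ ∂μ)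
    (hfg : ∀ z : ℂ, fg z = ∫ t, (1 - (t:ℂ) * z)⁻¹ ∂ρ)
    (y : ℝ) (hy : 0 < y) :
    ‖f (y * Complex.I)‖ ≤ ‖fg (y * Complex.I)‖ := by
  have hKμ := ae_memK μ hμ
  have hKν := ae_memK ν hν
  have hKρ := ae_memK ρ hρ
  have hKμμ := ae_memK2 μ μ hμ hμ
  set R : ℝ → ℝ := fun a => 1/(1+(a*y)^2) with hRdef
  set M : ℝ → ℝ := fun a => a*y/(1+(a*y)^2) with hMdef
  have hRc : Continuous R := by
    rw [hRdef]; exact continuous_const.div (by fun_prop) (fun x => by positivity)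
  have hMc : Continuous M := by
    rw [hMdef]; exact (continuous_id.mul continuous_const).div (by fun_prop)
      (fun x => by positivity)
  have hRb : ∀ a : ℝ, |R a| ≤ 1 := by
    intro a
    rw [hRdef]
    simp only
    rw [_root_.abs_div, _root_.abs_one, div_le_one (by positivity)]
    have := sq_nonneg (a*y)
    rw [abs_of_pos (by positivity : (0:ℝ) < 1+(a*y)^2)]
    linarith
  have hMb : ∀ a : ℝ, |M a| ≤ 1 := by
    intro a
    rw [hMdef]
    simp only
    rw [_root_.abs_div, abs_of_pos (by positivity : (0:ℝ) < 1+(a*y)^2),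
      div_le_one (by positivity)]
    nlinarith [sq_nonneg (|a*y| - 1), _root_.sq_abs (a*y)]
  -- basic integrabilities
  have IR : ∀ (m : Measure ℝ) [IsProbabilityMeasure m], ∀ t : ℝ,
      Integrable (fun s => R (s*t)) m := by
    intro m _ t
    exact bddInt m (hRc.comp (continuous_id.mul continuous_const)).aestronglyMeasurable
      (ae_of_all _ (fun s => hRb (s*t)))
  have IM : ∀ (m : Measure ℝ) [IsProbabilityMeasure m], ∀ t : ℝ,
      Integrable (fun s => M (s*t)) m := by
    intro m _ t
    exact bddInt m (hMc.comp (continuous_id.mul continuous_const)).aestronglyMeasurable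
      (ae_of_all _ (fun s => hMb (s*t)))
  have IRμ : Integrable R μ := bddInt μ hRc.aestronglyMeasurable (ae_of_all _ hRb)
  have IMμ : Integrable M μ := bddInt μ hMc.aestronglyMeasurable (ae_of_all _ hMb)
  have IRρ : Integrable R ρ := bddInt ρ hRc.aestronglyMeasurable (ae_of_all _ hRb)
  have IMρ : Integrable M ρ := bddInt ρ hMc.aestronglyMeasurable (ae_of_all _ hMb)
  set cr : ℝ := ∫ a, R a ∂μ with hcr
  set ci : ℝ := ∫ a, M a ∂μ with hci
  set dr : ℝ := ∫ p : ℝ × ℝ, R (p.1 * p.2) ∂(μ.prod ν) with hdr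
  set di : ℝ := ∫ p : ℝ × ℝ, M (p.1 * p.2) ∂(μ.prod ν) with hdi
  -- values of f and fg
  have hfval : f (y * Complex.I) = ((cr : ℝ) : ℂ) + ((ci : ℝ) : ℂ) * I := by
    rw [hf]
    have he : (fun t : ℝ => (1 - (t:ℂ) * ((y:ℂ) * I))⁻¹)
        = fun t : ℝ => ((R t : ℝ) : ℂ) + ((M t : ℝ) : ℂ) * I := by
      funext t
      rw [Adecomp t y, hRdef, hMdef]
    rw [he, cintegral μ IRμ IMμ]
  have hfgval : fg (y * Complex.I) = ((dr : ℝ) : ℂ) + ((di : ℝ) : ℂ) * I := by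
    rw [hfg]
    have he : (fun t : ℝ => (1 - (t:ℂ) * ((y:ℂ) * I))⁻¹)
        = fun t : ℝ => ((R t : ℝ) : ℂ) + ((M t : ℝ) : ℂ) * I := by
      funext t
      rw [Adecomp t y, hRdef, hMdef]
    rw [he, cintegral ρ IRρ IMρ]
    rw [hdr, hdi, ← transfer μ ν ρ hμ hν hρ hmom R hRc, ← transfer μ ν ρ hμ hν hρ hmom M hMc]
  -- the core inequality
  have hinner : ∀ t ∈ Set.Icc (0:ℝ) 1,
      cr^2 + ci^2 ≤ ∫ s, (R (s*t) * cr + M (s*t) * ci) ∂μ := by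
    intro t ht
    have hsplit : ∫ s, (R (s*t) * cr + M (s*t) * ci) ∂μ
        = (∫ s, R (s*t) ∂μ) * cr + (∫ s, M (s*t) ∂μ) * ci := by
      rw [integral_add ((IR μ t).mul_const cr) ((IM μ t).mul_const ci),
        integral_mul_const, integral_mul_const]
    -- double integral comparison over μ.prod μ
    have Ia : Integrable (fun z : ℝ × ℝ => R z.1 * R z.2) (μ.prod μ) := by
      apply bddInt _ ((hRc.comp continuous_fst).mul (hRc.comp continuous_snd)).aestronglyMeasurable
      refine ae_of_all _ (fun z => ?_)
      simp only [Pi.mul_apply, Pi.pow_apply, Function.comp_apply]; rw [_root_.abs_mul]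
      exact mul_le_one₀ (hRb _) (abs_nonneg _) (hRb _)
    have Ib : Integrable (fun z : ℝ × ℝ => M z.1 * M z.2) (μ.prod μ) := by
      apply bddInt _ ((hMc.comp continuous_fst).mul (hMc.comp continuous_snd)).aestronglyMeasurable
      refine ae_of_all _ (fun z => ?_)
      simp only [Pi.mul_apply, Pi.pow_apply, Function.comp_apply]; rw [_root_.abs_mul]
      exact mul_le_one₀ (hMb _) (abs_nonneg _) (hMb _)
    have Ic : Integrable (fun z : ℝ × ℝ => R (z.1*t) * R z.2) (μ.prod μ) := by
      apply bddInt _ (((hRc.comp (continuous_id.mul continuous_const)).comp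
        continuous_fst).mul (hRc.comp continuous_snd)).aestronglyMeasurable
      refine ae_of_all _ (fun z => ?_)
      simp only [Pi.mul_apply, Pi.pow_apply, Function.comp_apply]; rw [_root_.abs_mul]
      exact mul_le_one₀ (hRb _) (abs_nonneg _) (hRb _)
    have Id : Integrable (fun z : ℝ × ℝ => M (z.1*t) * M z.2) (μ.prod μ) := by
      apply bddInt _ (((hMc.comp (continuous_id.mul continuous_const)).comp
        continuous_fst).mul (hMc.comp continuous_snd)).aestronglyMeasurable
      refine ae_of_all _ (fun z => ?_)
      simp only [Pi.mul_apply, Pi.pow_apply, Function.comp_apply]; rw [_root_.abs_mul]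
      exact mul_le_one₀ (hMb _) (abs_nonneg _) (hMb _)
    have Ie : Integrable (fun z : ℝ × ℝ => R z.1 * R (z.2*t)) (μ.prod μ) := by
      apply bddInt _ ((hRc.comp continuous_fst).mul ((hRc.comp
        (continuous_id.mul continuous_const)).comp continuous_snd)).aestronglyMeasurable
      refine ae_of_all _ (fun z => ?_)
      simp only [Pi.mul_apply, Pi.pow_apply, Function.comp_apply]; rw [_root_.abs_mul]
      exact mul_le_one₀ (hRb _) (abs_nonneg _) (hRb _)
    have Ig : Integrable (fun z : ℝ × ℝ => M z.1 * M (z.2*t)) (μ.prod μ) := by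
      apply bddInt _ ((hMc.comp continuous_fst).mul ((hMc.comp
        (continuous_id.mul continuous_const)).comp continuous_snd)).aestronglyMeasurable
      refine ae_of_all _ (fun z => ?_)
      simp only [Pi.mul_apply, Pi.pow_apply, Function.comp_apply]; rw [_root_.abs_mul]
      exact mul_le_one₀ (hMb _) (abs_nonneg _) (hMb _)
    have hmono : ∫ z : ℝ × ℝ, 2 * (R z.1 * R z.2 + M z.1 * M z.2) ∂(μ.prod μ)
        ≤ ∫ z : ℝ × ℝ, (R (z.1*t) * R z.2 + M (z.1*t) * M z.2
            + R z.1 * R (z.2*t) + M z.1 * M (z.2*t)) ∂(μ.prod μ) := by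
      refine integral_mono_ae ?_ ?_ ?_
      · exact (Ia.add Ib).const_mul 2
      · exact ((Ic.add Id).add Ie).add Ig
      · filter_upwards [hKμμ] with z hz
        have hk := key2 y z.1 z.2 t hz.1.1 hz.2.1 (le_of_lt hy) ht.1 ht.2
        simp only [hRdef, hMdef]
        linarith [hk]
    have lhs_eq : ∫ z : ℝ × ℝ, 2 * (R z.1 * R z.2 + M z.1 * M z.2) ∂(μ.prod μ)
        = 2 * (cr * cr + ci * ci) := by
      rw [integral_const_mul, integral_add Ia Ib, integral_prod_mul (f := R) (g := R),
        integral_prod_mul (f := M) (g := M)]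
    have rhs_eq : ∫ z : ℝ × ℝ, (R (z.1*t) * R z.2 + M (z.1*t) * M z.2
          + R z.1 * R (z.2*t) + M z.1 * M (z.2*t)) ∂(μ.prod μ)
        = (∫ s, R (s*t) ∂μ) * cr + (∫ s, M (s*t) ∂μ) * ci
          + cr * (∫ s, R (s*t) ∂μ) + ci * (∫ s, M (s*t) ∂μ) := by
      have Icd : Integrable (fun z : ℝ × ℝ => R (z.1*t) * R z.2 + M (z.1*t) * M z.2)
          (μ.prod μ) := Ic.add Id
      have Icde : Integrable (fun z : ℝ × ℝ => R (z.1*t) * R z.2 + M (z.1*t) * M z.2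
          + R z.1 * R (z.2*t)) (μ.prod μ) := Icd.add Ie
      rw [integral_add Icde Ig, integral_add Icd Ie,
        integral_add Ic Id,
        integral_prod_mul (f := fun s => R (s*t)) (g := R),
        integral_prod_mul (f := fun s => M (s*t)) (g := M),
        integral_prod_mul (f := R) (g := fun s => R (s*t)),
        integral_prod_mul (f := M) (g := fun s => M (s*t))]
    rw [hsplit]
    rw [lhs_eq, rhs_eq] at hmono
    nlinarith [hmono]
  have hdrdi : cr^2 + ci^2 ≤ dr * cr + di * ci := by
    have Ibig : Integrable (fun p : ℝ × ℝ => R (p.1*p.2) * cr + M (p.1*p.2) * ci) (μ.prod ν) := by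
      apply Integrable.add
      · apply Integrable.mul_const
        apply bddInt _ ((hRc.comp (continuous_fst.mul continuous_snd))).aestronglyMeasurable
        exact ae_of_all _ (fun p => hRb _)
      · apply Integrable.mul_const
        apply bddInt _ ((hMc.comp (continuous_fst.mul continuous_snd))).aestronglyMeasurable
        exact ae_of_all _ (fun p => hMb _)
    have IRp : Integrable (fun p : ℝ × ℝ => R (p.1*p.2)) (μ.prod ν) := by
      apply bddInt _ ((hRc.comp (continuous_fst.mul continuous_snd))).aestronglyMeasurable
      exact ae_of_all _ (fun p => hRb _)
    have IMp : Integrable (fun p : ℝ × ℝ => M (p.1*p.2)) (μ.prod ν) := by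
      apply bddInt _ ((hMc.comp (continuous_fst.mul continuous_snd))).aestronglyMeasurable
      exact ae_of_all _ (fun p => hMb _)
    have h1 : dr * cr + di * ci
        = ∫ p : ℝ × ℝ, (R (p.1*p.2) * cr + M (p.1*p.2) * ci) ∂(μ.prod ν) := by
      rw [integral_add (IRp.mul_const cr) (IMp.mul_const ci),
        integral_mul_const, integral_mul_const, hdr, hdi]
    have h2 : ∫ p : ℝ × ℝ, (R (p.1*p.2) * cr + M (p.1*p.2) * ci) ∂(μ.prod ν)
        = ∫ t, ∫ s, (R (s*t) * cr + M (s*t) * ci) ∂μ ∂ν :=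
      integral_prod_symm _ Ibig
    have h3 : cr^2 + ci^2 ≤ ∫ t, ∫ s, (R (s*t) * cr + M (s*t) * ci) ∂μ ∂ν := by
      have hconst : cr^2 + ci^2 = ∫ _t : ℝ, (cr^2 + ci^2) ∂ν := by
        rw [integral_const]; simp
      rw [hconst]
      apply integral_mono_ae (integrable_const _) Ibig.integral_prod_right
      filter_upwards [hKν] with t ht
      exact hinner t ht
    linarith [h1, h2, h3]
  -- conclude
  rw [hfval, hfgval]
  set X := ‖((cr : ℝ) : ℂ) + ((ci : ℝ) : ℂ) * I‖ with hX
  set Yv := ‖((dr : ℝ) : ℂ) + ((di : ℝ) : ℂ) * I‖ with hYv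
  have hX2 : X^2 = cr^2 + ci^2 := by
    rw [hX, Complex.sq_norm, Complex.normSq_add_mul_I]
  have hre : ((((dr : ℝ) : ℂ) + ((di : ℝ) : ℂ) * I)
      * (starRingEnd ℂ) (((cr : ℝ) : ℂ) + ((ci : ℝ) : ℂ) * I)).re = dr * cr + di * ci := by
    simp [Complex.mul_re, Complex.add_re, Complex.add_im, Complex.mul_im,
      Complex.ofReal_re, Complex.ofReal_im, Complex.I_re, Complex.I_im]
  have h2 : dr * cr + di * ci ≤ Yv * X := by
    calc dr * cr + di * ci
        = ((((dr : ℝ) : ℂ) + ((di : ℝ) : ℂ) * I)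
            * (starRingEnd ℂ) (((cr : ℝ) : ℂ) + ((ci : ℝ) : ℂ) * I)).re := hre.symm
      _ ≤ ‖(((dr : ℝ) : ℂ) + ((di : ℝ) : ℂ) * I)
            * (starRingEnd ℂ) (((cr : ℝ) : ℂ) + ((ci : ℝ) : ℂ) * I)‖ := Complex.re_le_norm _
      _ = Yv * X := by rw [norm_mul, Complex.norm_conj]
  have h3 : X^2 ≤ Yv * X := by rw [hX2]; linarith
  have hXnn : 0 ≤ X := norm_nonneg _
  by_cases h0 : X = 0
  · rw [h0]; exact norm_nonneg _
  · have hpos : 0 < X := lt_of_le_of_ne hXnn (Ne.symm h0)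
    have hXX : X * X ≤ Yv * X := by nlinarith [h3]
    exact le_of_mul_le_mul_right hXX hpos
end

section
/- If f ∈ 𝒯 and f(z)/f(xz) ∈ 𝒯 for all x ∈ (0,1), then for w(y) := |f(iy)| and 0 < x, τ < 1, y > 0: log w(y) - log w(xy) - log w(τy) + log w(xτy) ≤ 0, i.e., log w is 'multiplicatively concave-ordered' along the imaginary axis. -/
open MeasureTheory Complex


noncomputable def cker (y t : ℝ) : ℂ := ((1:ℂ) - (t:ℂ) * ((y:ℂ) * I))⁻¹

lemma cker_re (y t : ℝ) : (cker y t).re = 1 / (1 + (t*y)^2) := by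
  simp [cker, Complex.inv_re, Complex.normSq_apply]
  ring_nf

lemma cker_im (y t : ℝ) : (cker y t).im = (t*y) / (1 + (t*y)^2) := by
  simp [cker, Complex.inv_im, Complex.normSq_apply]
  ring_nf

lemma one_le_abs_aux (y t : ℝ) : 1 ≤ ‖((1:ℂ) - (t:ℂ) * ((y:ℂ) * I))‖ := by
  have h : ((1:ℂ) - (t:ℂ) * ((y:ℂ) * I)).re = 1 := by simp
  calc (1:ℝ) = |((1:ℂ) - (t:ℂ) * ((y:ℂ) * I)).re| := by rw [h]; norm_num
    _ ≤ _ := Complex.abs_re_le_norm _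

lemma cker_abs_le (y t : ℝ) : ‖cker y t‖ ≤ 1 := by
  rw [cker, norm_inv]
  have := one_le_abs_aux y t
  have h0 : (0:ℝ) < ‖((1:ℂ) - (t:ℂ) * ((y:ℂ) * I))‖ := lt_of_lt_of_le one_pos this
  rw [inv_le_one_iff₀]
  right; exact this

lemma cker_continuous (y : ℝ) : Continuous (cker y) := by
  apply Continuous.inv₀
  · continuity
  · intro t
    intro h
    have : ((1:ℂ) - (t:ℂ) * ((y:ℂ) * I)).re = 1 := by simp
    rw [h] at this
    simp at this

lemma cker_integrable (μ : Measure ℝ) [IsFiniteMeasure μ] (y : ℝ) :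
    Integrable (cker y) μ := by
  apply Integrable.mono' (integrable_const (1:ℝ))
    ((cker_continuous y).aestronglyMeasurable)
  filter_upwards with t
  simpa using cker_abs_le y t

noncomputable def aker (y t : ℝ) : ℝ := 1 / (1 + (t*y)^2)
noncomputable def bker (y t : ℝ) : ℝ := (t*y) / (1 + (t*y)^2)

lemma aker_integrable (μ : Measure ℝ) [IsFiniteMeasure μ] (y : ℝ) :
    Integrable (aker y) μ := by
  have := (cker_integrable μ y).re
  unfold aker
  simp only [one_div]
  simpa [cker_re, one_div] using this

lemma bker_integrable (μ : Measure ℝ) [IsFiniteMeasure μ] (y : ℝ) :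
    Integrable (bker y) μ := by
  have := (cker_integrable μ y).im
  unfold bker
  simpa [cker_im] using this

lemma absSq_integral (μ : Measure ℝ) [IsProbabilityMeasure μ] (y : ℝ) :
    ‖∫ t, cker y t ∂μ‖^2
      = ∫ z : ℝ × ℝ, (aker y z.1 * aker y z.2 + bker y z.1 * bker y z.2) ∂(μ.prod μ) := by
  rw [← Complex.normSq_eq_norm_sq, Complex.normSq_apply]
  have hre : (∫ t, cker y t ∂μ).re = ∫ t, aker y t ∂μ := by
    rw [show (∫ t, cker y t ∂μ).re = RCLike.re (∫ t, cker y t ∂μ) from rfl,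
      ← integral_re (cker_integrable μ y)]
    congr 1; funext t
    simpa [aker] using cker_re y t
  have him : (∫ t, cker y t ∂μ).im = ∫ t, bker y t ∂μ := by
    rw [show (∫ t, cker y t ∂μ).im = RCLike.im (∫ t, cker y t ∂μ) from rfl,
      ← integral_im (cker_integrable μ y)]
    congr 1; funext t
    simpa [bker] using cker_im y t
  rw [hre, him, integral_add ((aker_integrable μ y).mul_prod (aker_integrable μ y))
    ((bker_integrable μ y).mul_prod (bker_integrable μ y)),
    integral_prod_mul, integral_prod_mul]

lemma key_form (t s y : ℝ) :
    aker y t * aker y s + bker y t * bker y s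
      = (1 + t*s*y^2) / ((1 + (t*y)^2) * (1 + (s*y)^2)) := by
  unfold aker bker
  have d1 : (0:ℝ) < 1 + (t*y)^2 := by positivity
  have d2 : (0:ℝ) < 1 + (s*y)^2 := by positivity
  field_simp

lemma key_mono {t s y1 y2 : ℝ} (ht : 0 ≤ t) (hs : 0 ≤ s) (h12 : y1 ≤ y2) (h1 : 0 ≤ y1) :
    aker y2 t * aker y2 s + bker y2 t * bker y2 s
      ≤ aker y1 t * aker y1 s + bker y1 t * bker y1 s := by
  rw [key_form, key_form]
  have hu : y1^2 ≤ y2^2 := by nlinarith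
  have hts : (0:ℝ) ≤ t*s := mul_nonneg ht hs
  have e1 : (0:ℝ) ≤ 1 + t*s*y1^2 := by nlinarith [mul_nonneg hts (sq_nonneg y1)]
  have e2 : (0:ℝ) ≤ 1 + t*s*y2^2 := by nlinarith [mul_nonneg hts (sq_nonneg y2)]
  rw [div_le_div_iff₀ (by positivity) (by positivity)]
  nlinarith [mul_nonneg (mul_nonneg (mul_nonneg hts e1) e2) (sub_nonneg.2 hu),
    mul_nonneg (sq_nonneg (t - s)) (sub_nonneg.2 hu)]

lemma ae_mem_Icc {μ : Measure ℝ} (hμs : μ (Set.Icc (0:ℝ) 1)ᶜ = 0) :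
    ∀ᵐ t ∂μ, t ∈ Set.Icc (0:ℝ) 1 := by
  rw [Filter.eventually_iff, mem_ae_iff]
  exact hμs

lemma abs_anti (μ : Measure ℝ) [IsProbabilityMeasure μ]
    (hμs : μ (Set.Icc (0:ℝ) 1)ᶜ = 0) {y1 y2 : ℝ} (h1 : 0 ≤ y1) (h12 : y1 ≤ y2) :
    ‖∫ t, cker y2 t ∂μ‖ ≤ ‖∫ t, cker y1 t ∂μ‖ := by
  have hsq : ‖∫ t, cker y2 t ∂μ‖^2 ≤ ‖∫ t, cker y1 t ∂μ‖^2 := by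
    rw [absSq_integral, absSq_integral]
    apply integral_mono_ae
    · exact ((aker_integrable μ y2).mul_prod (aker_integrable μ y2)).add
        ((bker_integrable μ y2).mul_prod (bker_integrable μ y2))
    · exact ((aker_integrable μ y1).mul_prod (aker_integrable μ y1)).add
        ((bker_integrable μ y1).mul_prod (bker_integrable μ y1))
    · have hfst : ∀ᵐ z : ℝ × ℝ ∂(μ.prod μ), 0 ≤ z.1 := by
        rw [Filter.eventually_iff, mem_ae_iff]
        apply measure_mono_null (t := (Set.Icc (0:ℝ) 1)ᶜ ×ˢ (Set.univ : Set ℝ))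
        · intro z hz
          simp only [Set.mem_setOf_eq, Set.mem_prod, Set.mem_compl_iff, Set.mem_Icc,
            Set.mem_univ, and_true] at hz ⊢
          intro hmem; exact hz hmem.1
        · rw [Measure.prod_prod, hμs, zero_mul]
      have hsnd : ∀ᵐ z : ℝ × ℝ ∂(μ.prod μ), 0 ≤ z.2 := by
        rw [Filter.eventually_iff, mem_ae_iff]
        apply measure_mono_null (t := (Set.univ : Set ℝ) ×ˢ (Set.Icc (0:ℝ) 1)ᶜ)
        · intro z hz
          simp only [Set.mem_setOf_eq, Set.mem_prod, Set.mem_compl_iff, Set.mem_Icc,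
            Set.mem_univ, true_and] at hz ⊢
          intro hmem; exact hz hmem.1
        · rw [Measure.prod_prod, hμs, mul_zero]
      filter_upwards [hfst, hsnd] with z hz1 hz2
      exact key_mono hz1 hz2 h12 h1
  have h2 : (0:ℝ) ≤ ‖∫ t, cker y2 t ∂μ‖ := norm_nonneg _
  have h1' : (0:ℝ) ≤ ‖∫ t, cker y1 t ∂μ‖ := norm_nonneg _
  nlinarith

lemma re_integral_pos (μ : Measure ℝ) [IsProbabilityMeasure μ]
    (hμs : μ (Set.Icc (0:ℝ) 1)ᶜ = 0) (y : ℝ) :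
    (0:ℝ) < (∫ t, cker y t ∂μ).re := by
  have hre : (∫ t, cker y t ∂μ).re = ∫ t, aker y t ∂μ := by
    rw [show (∫ t, cker y t ∂μ).re = RCLike.re (∫ t, cker y t ∂μ) from rfl,
      ← integral_re (cker_integrable μ y)]
    congr 1; funext t
    simpa [aker] using cker_re y t
  rw [hre]
  have hlb : ∀ᵐ t ∂μ, 1/(1+y^2) ≤ aker y t := by
    filter_upwards [ae_mem_Icc hμs] with t ht
    unfold aker
    apply div_le_div_of_nonneg_left one_pos.le (by positivity)
    nlinarith [ht.1, ht.2, sq_nonneg y, mul_nonneg ht.1 (sq_nonneg y)]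
  calc (0:ℝ) < 1/(1+y^2) := by positivity
    _ = ∫ _ : ℝ, 1/(1+y^2) ∂μ := by simp
    _ ≤ ∫ t, aker y t ∂μ := integral_mono_ae (integrable_const _) (aker_integrable μ y) hlb


/-- Membership in the class 𝒯 of generating functions of Hausdorff moment
sequences, on the slit plane `ℂ \ [1,∞)`. -/
def MemT (f : ℂ → ℂ) : Prop :=
  ∃ μ : Measure ℝ, IsProbabilityMeasure μ ∧ μ (Set.Icc (0:ℝ) 1)ᶜ = 0 ∧
    ∀ z : ℂ, ¬(z.im = 0 ∧ 1 ≤ z.re) → f z = ∫ t, (1 - (t:ℂ) * z)⁻¹ ∂μ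

lemma memT_eval {f : ℂ → ℂ} (hf : MemT f) {y : ℝ} (hy : 0 < y) :
    ∃ μ : Measure ℝ, IsProbabilityMeasure μ ∧ μ (Set.Icc (0:ℝ) 1)ᶜ = 0 ∧
      ∀ y' : ℝ, 0 < y' → f ((y':ℂ) * I) = ∫ t, cker y' t ∂μ := by
  obtain ⟨μ, hμp, hμs, hμf⟩ := hf
  refine ⟨μ, hμp, hμs, fun y' hy' => ?_⟩
  have hz : ¬((((y':ℂ)) * I).im = 0 ∧ 1 ≤ (((y':ℂ)) * I).re) := by
    simp [hy'.ne']
  rw [hμf _ hz]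
  rfl

theorem stmt18 (f : ℂ → ℂ) (hf : MemT f)
    (hquot : ∀ x ∈ Set.Ioo (0:ℝ) 1, MemT (fun z => f z / f ((x:ℂ) * z)))
    (w : ℝ → ℝ) (hw : ∀ y : ℝ, w y = ‖f (y * Complex.I)‖)
    (x τ y : ℝ) (hx : x ∈ Set.Ioo (0:ℝ) 1) (hτ : τ ∈ Set.Ioo (0:ℝ) 1) (hy : 0 < y) :
    Real.log (w y) - Real.log (w (x * y)) - Real.log (w (τ * y))
      + Real.log (w (x * τ * y)) ≤ 0 := by
  obtain ⟨hx0, hx1⟩ := hx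
  obtain ⟨hτ0, hτ1⟩ := hτ
  -- f does not vanish on the positive imaginary axis, so w is positive there
  have hwpos : ∀ y' : ℝ, 0 < y' → 0 < w y' := by
    intro y' hy'
    obtain ⟨μ, hμp, hμs, hμf⟩ := memT_eval hf hy'
    rw [hw, hμf y' hy']
    rw [norm_pos_iff]
    intro h0
    have := re_integral_pos μ hμs y'
    rw [h0] at this
    simp at this
  -- the quotient function and its monotonicity
  obtain ⟨ν, hνp, hνs, hνf⟩ := hquot x ⟨hx0, hx1⟩
  have hg : ∀ y' : ℝ, 0 < y' →
      f ((y':ℂ) * I) / f (((x*y' : ℝ):ℂ) * I) = ∫ t, cker y' t ∂ν := by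
    intro y' hy'
    have hz : ¬((((y':ℂ)) * I).im = 0 ∧ 1 ≤ (((y':ℂ)) * I).re) := by
      simp [hy'.ne']
    have := hνf ((y':ℂ) * I) hz
    simp only at this
    rw [show ((x:ℂ) * ((y':ℂ) * I)) = ((x*y' : ℝ):ℂ) * I by push_cast; ring] at this
    rw [this]
    rfl
  have hanti := abs_anti ν hνs (y1 := τ * y) (y2 := y)
    (by positivity) (by nlinarith)
  rw [← hg y hy, ← hg (τ*y) (by positivity)] at hanti
  rw [norm_div, norm_div] at hanti
  rw [show (x*(τ*y)) = x*τ*y by ring] at hanti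
  -- translate to w
  have h1 : w y / w (x*y) ≤ w (τ*y) / w (x*τ*y) := by
    rw [hw y, hw (x*y), hw (τ*y), hw (x*τ*y)]
    exact_mod_cast hanti
  have p1 := hwpos y hy
  have p2 := hwpos (x*y) (by positivity)
  have p3 := hwpos (τ*y) (by positivity)
  have p4 := hwpos (x*τ*y) (by positivity)
  have hlog := Real.log_le_log (by positivity) h1
  rw [Real.log_div p1.ne' p2.ne', Real.log_div p3.ne' p4.ne'] at hlog
  linarith
end
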